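/- Let K be a field of characteristic zero, s ≥ 1, and let A be the polynomial ring over K in the variable x and the variables u^k_j (1 ≤ k ≤ s, j ≥ 0), with D : A → A the unique K-derivation satisfying D(x) = 1 and D(u^k_j) = u^k_{j+1}. Then the kernel of D in A consists exactly of the constants: D(f) = 0 if and only if f ∈ K (f is a constant polynomial). -/

import Mathlib

/-- The algebra of differential polynomials in `x` (the variable `none`) and
`u^k_j = X (some (k, j))`, `1 ≤ k ≤ s`, `j ≥ 0`, over a field `K`. -/
abbrev DiffPoly (K : Type*) [Field K] (s : ℕ) : Type _ :=
  MvPolynomial (Option (Fin s × ℕ)) K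

open MvPolynomial

private lemma my_pderiv_comm {σ R : Type*} [CommSemiring R] (i j : σ) (f : MvPolynomial σ R) :
    pderiv i (pderiv j f) = pderiv j (pderiv i f) := by
  classical
  induction f using MvPolynomial.induction_on with
  | C a => simp
  | add p q hp hq => simp [hp, hq]
  | mul_X p k ih =>
    simp only [pderiv_mul, pderiv_X, map_add, ih]
    rcases eq_or_ne k i with rfl | hki <;> rcases eq_or_ne k j with rfl | hkj <;>
      simp [Pi.single_apply, *]

private lemma my_deriv_eq_sum {σ K : Type*} [Field K]
    (D : Derivation K (MvPolynomial σ K) (MvPolynomial σ K))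
    (f : MvPolynomial σ K) (t : Finset σ) (hvars : f.vars ⊆ t) :
    D f = ∑ i ∈ t, D (X i) * pderiv i f := by
  classical
  have happ : ∀ (u : Finset σ) (g : MvPolynomial σ K),
      (∑ i ∈ u, D (X i) • pderiv i : Derivation K _ _) g = ∑ i ∈ u, D (X i) * pderiv i g := by
    intro u g
    induction u using Finset.induction_on with
    | empty => simp
    | insert _ _ hnotmem ih => simp_all [Finset.sum_insert hnotmem]
  rw [← happ]
  refine derivation_eq_of_forall_mem_vars (fun i hi => ?_)
  rw [happ, Finset.sum_eq_single i]
  · simp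
  · intro j _ hji; simp [pderiv_X, hji]
  · intro h; exact absurd (hvars hi) h

private lemma my_coeff_pderiv {σ K : Type*} [Field K] (i : σ) (m : σ →₀ ℕ)
    (f : MvPolynomial σ K) :
    coeff m (pderiv i f) = (m i + 1) * coeff (m + Finsupp.single i 1) f := by
  classical
  induction f using MvPolynomial.induction_on' with
  | add p q hp hq => simp [hp, hq, mul_add]
  | monomial s a =>
    rw [pderiv_monomial, coeff_monomial, coeff_monomial]
    split_ifs with h1 h2 h2
    · subst h2
      rw [Finsupp.add_apply, Finsupp.single_eq_same]
      push_cast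
      ring
    · have hsi : s i = 0 := by
        by_contra h
        apply h2
        have hle : Finsupp.single i 1 ≤ s := by
          rw [Finsupp.single_le_iff]; omega
        rw [← h1, tsub_add_cancel_of_le hle]
      simp [hsi]
    · exact absurd (by rw [h2, add_tsub_cancel_right]) h1
    · simp

private lemma my_eq_C_of_pderiv_eq_zero {σ K : Type*} [Field K] [CharZero K]
    (f : MvPolynomial σ K) (h : ∀ i, pderiv i f = 0) : ∃ c : K, f = C c := by
  classical
  refine ⟨coeff 0 f, ?_⟩
  ext m
  rcases eq_or_ne m 0 with rfl | hm
  · simp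
  · rw [coeff_C, if_neg (Ne.symm hm)]
    obtain ⟨i, hi⟩ : ∃ i, m i ≠ 0 := by
      by_contra h'
      push_neg at h'
      exact hm (Finsupp.ext h')
    have := my_coeff_pderiv i (m - Finsupp.single i 1) f
    rw [h i] at this
    have hle : Finsupp.single i 1 ≤ m := by rw [Finsupp.single_le_iff]; omega
    rw [tsub_add_cancel_of_le hle] at this
    simp only [coeff_zero] at this
    rcases mul_eq_zero.mp this.symm with h' | h'
    · exact absurd h' (Nat.cast_add_one_ne_zero _)
    · exact h'

/-- Let `K` be a field of characteristic zero, `s ≥ 1`, and `A` the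
polynomial ring over `K` in `x` and the variables `u^k_j`, with `D` the unique
`K`-derivation satisfying `D(x) = 1` and `D(u^k_j) = u^k_{j+1}` (the total derivative).
Then the kernel of `D` in `A` consists exactly of the constants:
`D(f) = 0` iff `f` is a constant polynomial. -/
theorem stmt_9 {K : Type*} [Field K] [CharZero K] (s : ℕ) (hs : 1 ≤ s)
    (D : Derivation K (DiffPoly K s) (DiffPoly K s))
    (hx : D (MvPolynomial.X none) = 1)
    (hu : ∀ (k : Fin s) (j : ℕ),
      D (MvPolynomial.X (some (k, j))) = MvPolynomial.X (some (k, j + 1)))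
    (f : DiffPoly K s) :
    D f = 0 ↔ ∃ c : K, f = MvPolynomial.C c := by
  classical
  constructor
  · intro hDf
    set N : ℕ := f.vars.sup (fun i => i.elim 0 Prod.snd) with hN
    set P : Finset (Fin s × ℕ) := Finset.univ ×ˢ Finset.range (N + 1) with hP
    have hvN : ∀ k j, some (k, j) ∈ f.vars → j ≤ N := by
      intro k j hmem
      have := Finset.le_sup (f := fun i : Option (Fin s × ℕ) => i.elim 0 Prod.snd) hmem
      simpa using this
    have hvars : f.vars ⊆ insert none (P.image some) := by
      intro i hi
      match i with
      | none => exact Finset.mem_insert_self _ _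
      | some (k, j) =>
        refine Finset.mem_insert_of_mem (Finset.mem_image_of_mem some ?_)
        rw [hP, Finset.mem_product, Finset.mem_range]
        exact ⟨Finset.mem_univ _, Nat.lt_succ_of_le (hvN k j hi)⟩
    have hsum : D f = pderiv none f +
        ∑ p ∈ P, X (some (p.1, p.2 + 1)) * pderiv (some p) f := by
      rw [my_deriv_eq_sum D f _ hvars, Finset.sum_insert (by simp),
        Finset.sum_image (fun a _ b _ h => Option.some_injective _ h), hx, one_mul]
      congr 1
      refine Finset.sum_congr rfl (fun p _ => ?_)
      rw [hu p.1 p.2]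
    -- the downward-induction step
    have hstep : ∀ (k : Fin s) (j : ℕ),
        pderiv (some (k, j + 1)) f = 0 → pderiv (some (k, j)) f = 0 := by
      intro k j hj1
      by_cases hjN : j ≤ N
      · have h0 : pderiv (some (k, j + 1)) (D f) = 0 := by rw [hDf]; simp
        rw [hsum, map_add, map_sum] at h0
        have hterm : ∀ p ∈ P,
            pderiv (some (k, j + 1)) (X (some (p.1, p.2 + 1)) * pderiv (some p) f)
              = if p = (k, j) then pderiv (some (k, j)) f else 0 := by
          intro p _
          rw [pderiv_mul]
          have hcomm : pderiv (some (k, j + 1)) (pderiv (some p) f) = 0 := by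
            rw [my_pderiv_comm, hj1, map_zero]
          rw [hcomm, mul_zero, add_zero]
          split_ifs with hpe
          · subst hpe
            rw [pderiv_X_self, one_mul]
          · rw [pderiv_X_of_ne, zero_mul]
            intro hcontra
            apply hpe
            have : p.1 = k ∧ p.2 + 1 = j + 1 := by
              have := Option.some_injective _ hcontra
              exact ⟨congrArg Prod.fst this, congrArg Prod.snd this⟩
            obtain ⟨h1, h2⟩ := this
            exact Prod.ext h1 (by omega)
        rw [Finset.sum_congr rfl hterm, Finset.sum_ite_eq' P (k, j)
          (fun _ => pderiv (some (k, j)) f)] at h0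
        have hkjP : (k, j) ∈ P := by
          rw [hP, Finset.mem_product, Finset.mem_range]
          exact ⟨Finset.mem_univ _, Nat.lt_succ_of_le hjN⟩
        rw [if_pos hkjP] at h0
        have hcomm0 : pderiv (some (k, j + 1)) (pderiv none f) = 0 := by
          rw [my_pderiv_comm, hj1, map_zero]
        rw [hcomm0, zero_add] at h0
        exact h0
      · refine pderiv_eq_zero_of_notMem_vars (fun hmem => ?_)
        exact hjN (hvN k j hmem)
    have hu0 : ∀ (k : Fin s) (j : ℕ), pderiv (some (k, j)) f = 0 := by
      have key : ∀ (d : ℕ) (k : Fin s) (j : ℕ), N + 1 ≤ j + d →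
          pderiv (some (k, j)) f = 0 := by
        intro d
        induction d with
        | zero =>
          intro k j hj
          refine pderiv_eq_zero_of_notMem_vars (fun hmem => ?_)
          have := hvN k j hmem
          omega
        | succ d ih =>
          intro k j hj
          exact hstep k j (ih k (j + 1) (by omega))
      exact fun k j => key (N + 1) k j (by omega)
    have hnone : pderiv none f = 0 := by
      have : D f = pderiv none f := by
        rw [hsum]
        rw [Finset.sum_congr rfl (fun p _ => by rw [hu0 p.1 p.2, mul_zero])]
        simp
      rw [← this, hDf]
    refine my_eq_C_of_pderiv_eq_zero f (fun i => ?_)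
    match i with
    | none => exact hnone
    | some (k, j) => exact hu0 k j
  · rintro ⟨c, rfl⟩
    simp
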